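/- Let n ≥ 1, let K, L ⊂ ℝⁿ be non-empty compact sets, let λ > 0 and set μ = dist_H(K, L). Then for every x ∈ ℝⁿ, |M_λ(x; K) − M_λ(x; L)| ≤ μ(1 + λ)( (dist(x; K) + μ)² + 2·dist(x; K) + 2μ + 1 ). -/

import Mathlib

/-- Convex envelope: pointwise sup of affine minorants. -/
noncomputable def convEnv {n : ℕ} (g : EuclideanSpace ℝ (Fin n) → ℝ)
    (x : EuclideanSpace ℝ (Fin n)) : ℝ :=
  sSup {a : ℝ | ∃ ℓ : EuclideanSpace ℝ (Fin n) →ᵃ[ℝ] ℝ, (∀ y, ℓ y ≤ g y) ∧ a = ℓ x}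

/-- Lower compensated convex transform. -/
noncomputable def lowerT {n : ℕ} (lam : ℝ) (f : EuclideanSpace ℝ (Fin n) → ℝ)
    (x : EuclideanSpace ℝ (Fin n)) : ℝ :=
  convEnv (fun y => f y + lam * ‖y‖ ^ 2) x - lam * ‖x‖ ^ 2

/-- Quadratic multiscale medial axis map
`M_λ(x; K) = (1+λ)(dist²(x;K) − C^l_λ(dist²(·;K))(x))`. -/
noncomputable def mmam {n : ℕ} (lam : ℝ) (K : Set (EuclideanSpace ℝ (Fin n)))
    (x : EuclideanSpace ℝ (Fin n)) : ℝ :=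
  (1 + lam) * (Metric.infDist x K ^ 2 - lowerT lam (fun y => Metric.infDist y K ^ 2) x)

open Metric

section Aux
variable {n : ℕ}

noncomputable def innA (x : EuclideanSpace ℝ (Fin n)) : EuclideanSpace ℝ (Fin n) →ᵃ[ℝ] ℝ :=
  ((innerSL ℝ x).toLinearMap).toAffineMap

lemma affSet_bddAbove (g : EuclideanSpace ℝ (Fin n) → ℝ) (x : EuclideanSpace ℝ (Fin n)) :
    BddAbove {a : ℝ | ∃ ℓ : EuclideanSpace ℝ (Fin n) →ᵃ[ℝ] ℝ, (∀ y, ℓ y ≤ g y) ∧ a = ℓ x} := by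
  refine ⟨g x, ?_⟩
  rintro a ⟨ℓ, hℓ, rfl⟩
  exact hℓ x

lemma affSet_zero_mem (g : EuclideanSpace ℝ (Fin n) → ℝ) (hg : ∀ y, 0 ≤ g y)
    (x : EuclideanSpace ℝ (Fin n)) :
    (0:ℝ) ∈ {a : ℝ | ∃ ℓ : EuclideanSpace ℝ (Fin n) →ᵃ[ℝ] ℝ, (∀ y, ℓ y ≤ g y) ∧ a = ℓ x} :=
  ⟨AffineMap.const ℝ _ 0, fun y => by simpa using hg y, by simp⟩

lemma le_convEnv (g : EuclideanSpace ℝ (Fin n) → ℝ) (x : EuclideanSpace ℝ (Fin n))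
    (ℓ : EuclideanSpace ℝ (Fin n) →ᵃ[ℝ] ℝ) (hℓ : ∀ y, ℓ y ≤ g y) :
    ℓ x ≤ convEnv g x :=
  le_csSup (affSet_bddAbove g x) ⟨ℓ, hℓ, rfl⟩

lemma convEnv_le (g : EuclideanSpace ℝ (Fin n) → ℝ) (hg : ∀ y, 0 ≤ g y)
    (x : EuclideanSpace ℝ (Fin n)) : convEnv g x ≤ g x := by
  apply csSup_le ⟨0, affSet_zero_mem g hg x⟩
  rintro a ⟨ℓ, hℓ, rfl⟩
  exact hℓ x

lemma key_ineq (K L : Set (EuclideanSpace ℝ (Fin n))) (μ lam : ℝ) (hμ0 : 0 ≤ μ)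
    (hlam : 0 < lam) (hKL : ∀ y, infDist y K ≤ infDist y L + μ)
    (x : EuclideanSpace ℝ (Fin n)) :
    convEnv (fun y => infDist y K ^ 2 + lam * ‖y‖ ^ 2) x ≤
      convEnv (fun y => infDist y L ^ 2 + lam * ‖y‖ ^ 2) x
        + μ * infDist x L ^ 2 + μ + μ ^ 2 := by
  have h1μ : (0:ℝ) < 1 + μ := by linarith
  set lam' := lam / (1 + μ) with hlam'def
  have hlam' : 0 < lam' := div_pos hlam h1μ
  have hll : lam' * (1 + μ) = lam := by rw [hlam'def]; exact div_mul_cancel₀ lam h1μ.ne'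
  have hgK : ∀ y : EuclideanSpace ℝ (Fin n), 0 ≤ infDist y K ^ 2 + lam * ‖y‖ ^ 2 := by
    intro y; positivity
  have hgL : ∀ y : EuclideanSpace ℝ (Fin n), 0 ≤ infDist y L ^ 2 + lam * ‖y‖ ^ 2 := by
    intro y; positivity
  have hgL' : ∀ y : EuclideanSpace ℝ (Fin n), 0 ≤ infDist y L ^ 2 + lam' * ‖y‖ ^ 2 := by
    intro y; positivity
  -- Step 1
  have step1 : convEnv (fun y => infDist y K ^ 2 + lam * ‖y‖ ^ 2) x ≤
      (1 + μ) * convEnv (fun y => infDist y L ^ 2 + lam' * ‖y‖ ^ 2) x + (μ + μ ^ 2) := by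
    apply csSup_le ⟨0, affSet_zero_mem _ hgK x⟩
    rintro a ⟨ℓ, hℓ, rfl⟩
    set c : ℝ := μ + μ ^ 2 with hc
    set ℓ' : EuclideanSpace ℝ (Fin n) →ᵃ[ℝ] ℝ :=
      (1 + μ)⁻¹ • (ℓ - AffineMap.const ℝ (EuclideanSpace ℝ (Fin n)) c) with hℓ'def
    have happ : ∀ y, ℓ' y = (ℓ y - c) / (1 + μ) := by
      intro y
      simp only [hℓ'def, AffineMap.coe_smul, AffineMap.coe_sub, AffineMap.coe_const,
        Pi.smul_apply, Pi.sub_apply, Function.const_apply, smul_eq_mul]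
      ring
    have hkey : ∀ y, ℓ y - c ≤ (1 + μ) * (infDist y L ^ 2 + lam' * ‖y‖ ^ 2) := by
      intro y
      have h1 := hℓ y
      have h2 := hKL y
      have h3 := infDist_nonneg (x := y) (s := L)
      have h4 := infDist_nonneg (x := y) (s := K)
      have hy : (1 + μ) * (lam' * ‖y‖ ^ 2) = lam * ‖y‖ ^ 2 := by
        rw [← hll]; ring
      nlinarith [sq_nonneg (infDist y L - 1), sq_nonneg (‖y‖)]
    have hℓ' : ∀ y, ℓ' y ≤ infDist y L ^ 2 + lam' * ‖y‖ ^ 2 := by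
      intro y
      rw [happ y, div_le_iff₀ h1μ]
      nlinarith [hkey y]
    have hx := le_convEnv (fun y => infDist y L ^ 2 + lam' * ‖y‖ ^ 2) x ℓ' hℓ'
    rw [happ x, div_le_iff₀ h1μ] at hx
    nlinarith [hx]
  -- Step 2 : monotonicity in lambda
  have step2 : convEnv (fun y => infDist y L ^ 2 + lam' * ‖y‖ ^ 2) x ≤
      convEnv (fun y => infDist y L ^ 2 + lam * ‖y‖ ^ 2) x - (lam - lam') * ‖x‖ ^ 2 := by
    apply csSup_le ⟨0, affSet_zero_mem _ hgL' x⟩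
    rintro a ⟨ℓ, hℓ, rfl⟩
    set c : ℝ := lam - lam' with hc
    have hc0 : 0 ≤ c := by
      have : lam' ≤ lam := by
        rw [hlam'def]
        exact div_le_self hlam.le (by linarith)
      linarith
    set ℓt : EuclideanSpace ℝ (Fin n) →ᵃ[ℝ] ℝ :=
      ℓ + (2 * c) • innA x - AffineMap.const ℝ (EuclideanSpace ℝ (Fin n)) (c * ‖x‖ ^ 2)
      with hℓtdef
    have happ : ∀ y, ℓt y = ℓ y + 2 * c * inner ℝ x y - c * ‖x‖ ^ 2 := by
      intro y
      simp only [hℓtdef, AffineMap.coe_add, AffineMap.coe_smul, AffineMap.coe_sub,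
        AffineMap.coe_const, Pi.add_apply, Pi.smul_apply, Pi.sub_apply, Function.const_apply,
        innA, LinearMap.coe_toAffineMap, ContinuousLinearMap.coe_coe, innerSL_apply_apply,
        smul_eq_mul]
    have hℓt : ∀ y, ℓt y ≤ infDist y L ^ 2 + lam * ‖y‖ ^ 2 := by
      intro y
      rw [happ y]
      have h1 := hℓ y
      have hin : (2:ℝ) * inner ℝ x y ≤ ‖x‖ ^ 2 + ‖y‖ ^ 2 := by
        nlinarith [real_inner_le_norm x y, sq_nonneg (‖x‖ - ‖y‖)]
      have := mul_le_mul_of_nonneg_left hin hc0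
      nlinarith [this]
    have hx := le_convEnv (fun y => infDist y L ^ 2 + lam * ‖y‖ ^ 2) x ℓt hℓt
    rw [happ x, real_inner_self_eq_norm_sq] at hx
    linarith
  -- Step 3
  have step3 : convEnv (fun y => infDist y L ^ 2 + lam * ‖y‖ ^ 2) x ≤
      infDist x L ^ 2 + lam * ‖x‖ ^ 2 := convEnv_le _ hgL x
  -- Combine
  have hmono := mul_le_mul_of_nonneg_left step2 h1μ.le
  have hmono' := mul_le_mul_of_nonneg_left step3 hμ0
  have hid : (1 + μ) * (lam - lam') = μ * lam := by
    have h := hll; nlinarith [hll]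
  nlinarith [step1, hmono, hmono', hid]


end Aux

/-- Hausdorff stability of the multiscale medial axis map. -/
theorem mmam_hausdorff_stability (n : ℕ) (hn : 1 ≤ n)
    (K L : Set (EuclideanSpace ℝ (Fin n))) (hK : K.Nonempty) (hL : L.Nonempty)
    (hKc : IsCompact K) (hLc : IsCompact L)
    (lam : ℝ) (hlam : 0 < lam) (μ : ℝ) (hμ : μ = Metric.hausdorffDist K L)
    (x : EuclideanSpace ℝ (Fin n)) :
    |mmam lam K x - mmam lam L x| ≤
      μ * (1 + lam) * ((Metric.infDist x K + μ) ^ 2 + 2 * Metric.infDist x K + 2 * μ + 1) := by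
  have hμ0 : 0 ≤ μ := hμ ▸ Metric.hausdorffDist_nonneg
  have hfin : EMetric.hausdorffEdist K L ≠ ⊤ :=
    Metric.hausdorffEdist_ne_top_of_nonempty_of_bounded hK hL hKc.isBounded hLc.isBounded
  have hfin' : EMetric.hausdorffEdist L K ≠ ⊤ := by unfold EMetric.hausdorffEdist at hfin ⊢; rwa [EMetric.hausdorffEdist_comm]
  have hKL : ∀ y, Metric.infDist y K ≤ Metric.infDist y L + μ := by
    intro y
    rw [hμ, Metric.hausdorffDist_comm]
    exact Metric.infDist_le_infDist_add_hausdorffDist hfin'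
  have hLK : ∀ y, Metric.infDist y L ≤ Metric.infDist y K + μ := by
    intro y
    rw [hμ]
    exact Metric.infDist_le_infDist_add_hausdorffDist hfin
  have h1 := key_ineq K L μ lam hμ0 hlam hKL x
  have h2 := key_ineq L K μ lam hμ0 hlam hLK x
  set dK := Metric.infDist x K with hdKdef
  set dL := Metric.infDist x L with hdLdef
  have hdKn : 0 ≤ dK := Metric.infDist_nonneg
  have hdLn : 0 ≤ dL := Metric.infDist_nonneg
  have hdK := hKL x
  have hdL := hLK x
  have hsq1 : dK ^ 2 - dL ^ 2 ≤ μ * (2 * dK + μ) := by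
    nlinarith [mul_nonneg (by linarith : (0:ℝ) ≤ μ - (dK - dL)) hdKn, sq_nonneg (dK - dL),
      sq_nonneg μ, mul_nonneg hμ0 hμ0]
  have hsq2 : dL ^ 2 - dK ^ 2 ≤ μ * (2 * dK + μ) := by
    nlinarith [mul_nonneg (by linarith : (0:ℝ) ≤ μ - (dL - dK)) (by linarith : (0:ℝ) ≤ dL + dK),
      mul_nonneg hμ0 (by linarith : (0:ℝ) ≤ μ - (dL - dK))]
  have hsqL : dL ^ 2 ≤ (dK + μ) ^ 2 := by nlinarith
  have hsqK : dK ^ 2 ≤ (dK + μ) ^ 2 := by nlinarith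
  set cK := convEnv (fun y => Metric.infDist y K ^ 2 + lam * ‖y‖ ^ 2) x with hcKdef
  set cL := convEnv (fun y => Metric.infDist y L ^ 2 + lam * ‖y‖ ^ 2) x with hcLdef
  have hmm : ∀ J : Set (EuclideanSpace ℝ (Fin n)),
      mmam lam J x = (1 + lam) * (Metric.infDist x J ^ 2
        - (convEnv (fun y => Metric.infDist y J ^ 2 + lam * ‖y‖ ^ 2) x - lam * ‖x‖ ^ 2)) := by
    intro J; rfl
  rw [hmm K, hmm L, ← hdKdef, ← hdLdef, ← hcKdef, ← hcLdef, abs_sub_le_iff]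
  have h1lam : (0:ℝ) ≤ 1 + lam := by linarith
  constructor
  · -- mmam K - mmam L
    have hstep : dK ^ 2 - dL ^ 2 - cK + cL ≤
        μ * ((dK + μ) ^ 2 + 2 * dK + 2 * μ + 1) := by
      nlinarith [h2, hsq1, mul_le_mul_of_nonneg_left hsqK hμ0]
    nlinarith [mul_le_mul_of_nonneg_left hstep h1lam]
  · have hstep : dL ^ 2 - dK ^ 2 - cL + cK ≤
        μ * ((dK + μ) ^ 2 + 2 * dK + 2 * μ + 1) := by
      nlinarith [h1, hsq2, mul_le_mul_of_nonneg_left hsqL hμ0]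
    nlinarith [mul_le_mul_of_nonneg_left hstep h1lam]
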